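/- Home Endowed Deferred Acceptance (HEDA) is patience-free: for any time t, home h, and action profile with μ_t(h) ≠ h, and any t' > t, the counterfactual placement satisfies V_h^t(μ_t(h)) ≥ V_h^{t'}(μ̂_{t'}(h)). -/
import Mathlib


/-- A one-to-one (partial) matching between children and homes. -/
structure Matching (C H : Type) where
  toHome : C → Option H
  toChild : H → Option C
  consistent : ∀ c h, toHome c = some h ↔ toChild h = some c

/-- A dynamic matching market: cardinal utilities, arrival times, waiting costs. -/
structure Market (C H : Type) where
  U : C → H → ℝ
  V : H → C → ℝ
  arrC : C → ℕ
  arrH : H → ℕ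
  wC : ℝ
  wH : ℝ

/-- Accept/reject action profiles of homes over time. -/
abbrev Actions (H : Type) := H → ℕ → Bool

/-- A dynamic mechanism: given the homes' action profile, a matching in each period. -/
abbrev Mechanism (C H : Type) := Actions H → ℕ → Matching C H

open scoped Classical in
/-- The counterfactual profile in which home `h` rejects every placement before `t'`,
accepts at `t'`, and otherwise plays as in `a`; all other homes play as in `a`. -/
noncomputable def cfProfile {H : Type} (a : Actions H) (h : H) (t' : ℕ) : Actions H :=
  fun h' k =>
    if h' = h then (if k < t' then false else if k = t' then true else a h' k)
    else a h' k

namespace Market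

variable {C H : Type}

/-- Time-discounted utility of home `h` for child `c` at time `t`:
`V_h^t(c) = V_h(c) - (t - arrival(h)) * w_H`. -/
noncomputable def Vt (M : Market C H) (h : H) (c : C) (t : ℕ) : ℝ :=
  M.V h c - ((t : ℝ) - (M.arrH h : ℝ)) * M.wH

/-- Child `c` is active (present in the market) at time `t`:
she has arrived and no home has yet accepted a placement with her. -/
def activeC (M : Market C H) (Q : Mechanism C H) (a : Actions H) (c : C) (t : ℕ) : Prop :=
  M.arrC c ≤ t ∧ ¬ ∃ k < t, ∃ h, (Q a k).toHome c = some h ∧ a h k = true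

/-- Home `h` is active (present in the market) at time `t`:
it has arrived and has not yet accepted a placement. -/
def activeH (M : Market C H) (Q : Mechanism C H) (a : Actions H) (h : H) (t : ℕ) : Prop :=
  M.arrH h ≤ t ∧ ¬ ∃ k < t, (Q a k).toChild h ≠ none ∧ a h k = true

/-- Admissibility: the mechanism only matches agents active in the current market. -/
def feasible (M : Market C H) (Q : Mechanism C H) : Prop :=
  ∀ a t c h, (Q a t).toHome c = some h → M.activeC Q a c t ∧ M.activeH Q a h t

/-- Child `c` has been adopted (placement accepted) by time `t`. -/
def childAdopted (M : Market C H) (Q : Mechanism C H) (a : Actions H) (c : C) (t : ℕ) : Prop :=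
  ∃ k ≤ t, ∃ h, (Q a k).toHome c = some h ∧ a h k = true

/-- Home `h` has accepted a placement by time `t`. -/
def homeAccepted (M : Market C H) (Q : Mechanism C H) (a : Actions H) (h : H) (t : ℕ) : Prop :=
  ∃ k ≤ t, (Q a k).toChild h ≠ none ∧ a h k = true

/-- Justified envy-freeness at every period and action profile: no mutually matched
child and home both strictly prefer each other to their assigned partners. -/
def justifiedEnvyFree (M : Market C H) (Q : Mechanism C H) : Prop :=
  ∀ a t c h h' c', (Q a t).toHome c = some h' → (Q a t).toChild h = some c' →
    ¬ (M.U c h' < M.U c h ∧ M.V h c' < M.V h c)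

/-- Individual rationality at every period and action profile. -/
def individuallyRational (M : Market C H) (Q : Mechanism C H) : Prop :=
  ∀ a t c h, (Q a t).toHome c = some h → 0 ≤ M.U c h ∧ 0 ≤ M.V h c

/-- Patience-freeness: any placement offered at `t` is weakly better (time-discounted)
than the placement the home would receive at any later `t'` in the counterfactual in
which it rejects all placements before `t'` and accepts at `t'`. -/
noncomputable def patienceFree (M : Market C H) (Q : Mechanism C H) : Prop :=
  ∀ (a : Actions H) (t : ℕ) (h : H) (c : C), (Q a t).toChild h = some c →
    ∀ t' > t, ∀ c', (Q (cfProfile a h t') t').toChild h = some c' →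
      M.Vt h c' t' ≤ M.Vt h c t

/-- Dynamic envy-freeness: justified envy-free, patience-free, individually rational. -/
noncomputable def dynamicEnvyFree (M : Market C H) (Q : Mechanism C H) : Prop :=
  M.justifiedEnvyFree Q ∧ M.patienceFree Q ∧ M.individuallyRational Q

/-- Strict non-wastefulness: after every history and action profile there is never an
active unmatched child and an active unmatched home that find each other acceptable. -/
def strictlyNonWasteful (M : Market C H) (Q : Mechanism C H) : Prop :=
  ∀ a t, ¬ ∃ c h, M.activeC Q a c t ∧ M.activeH Q a h t ∧
    0 ≤ M.U c h ∧ 0 ≤ M.V h c ∧ (Q a t).toHome c = none ∧ (Q a t).toChild h = none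

/-- Weak non-wastefulness: when every home accepts every offered placement,
no mutually acceptable unmatched pair ever remains. -/
def weaklyNonWasteful (M : Market C H) (Q : Mechanism C H) : Prop :=
  ∀ t, ¬ ∃ c h, M.activeC Q (fun _ _ => true) c t ∧ M.activeH Q (fun _ _ => true) h t ∧
    0 ≤ M.U c h ∧ 0 ≤ M.V h c ∧
    (Q (fun _ _ => true) t).toHome c = none ∧ (Q (fun _ _ => true) t).toChild h = none

/-- The mechanism is a deterministic function of the history of markets (active sets)
and past matchings. -/
def historyDetermined (M : Market C H) (Q : Mechanism C H) : Prop :=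
  ∀ a a' t,
    (∀ k ≤ t, ∀ c, M.activeC Q a c k ↔ M.activeC Q a' c k) →
    (∀ k ≤ t, ∀ h, M.activeH Q a h k ↔ M.activeH Q a' h k) →
    (∀ k < t, Q a k = Q a' k) →
    Q a t = Q a' t

/-- `x` is the realized (true-utility, time-discounted) payoff of home `h`:
the time-discounted utility of an accepted placement, or `0` if `h` never accepts. -/
noncomputable def payoffIs (M : Market C H) (Q : Mechanism C H) (a : Actions H)
    (h : H) (x : ℝ) : Prop :=
  (∃ t c, (Q a t).toChild h = some c ∧ a h t = true ∧ x = M.Vt h c t) ∨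
  ((∀ t c, (Q a t).toChild h = some c → a h t = false) ∧ x = 0)

end Market

/-- An endowment structure: `N+1` nonempty, compact, strictly ordered intervals
spanning `[Vmin, Vmax]`, with every element of `E i` strictly above every element
of `E (i+1)`. -/
structure Endowment (N : ℕ) (Vmin Vmax : ℝ) where
  E : ℕ → Set ℝ
  compact : ∀ i ≤ N, IsCompact (E i)
  nonempty : ∀ i ≤ N, (E i).Nonempty
  subset : ∀ i ≤ N, E i ⊆ Set.Icc Vmin Vmax
  ordered : ∀ i < N, ∀ x ∈ E i, ∀ y ∈ E (i + 1), y < x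
  covers : ∀ x ∈ Set.Icc Vmin Vmax, ∃ i ≤ N, x ∈ E i

namespace Market

variable {C H : Type}

/-- The time-dependent endowment `B_t(h)` of home `h`. -/
noncomputable def Bend (M : Market C H) {N : ℕ} {Vmin Vmax : ℝ}
    (Ew : Endowment N Vmin Vmax) (h : H) (t : ℕ) : Set ℝ :=
  if t - M.arrH h ≤ N then Ew.E (t - M.arrH h) else {Vmin}

/-- Stability with respect to the endowment-modified preferences: a child is acceptable
to a home only if her time-discounted utility lies in the home's current endowment. -/
noncomputable def IsStableEnd (M : Market C H) {N : ℕ} {Vmin Vmax : ℝ}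
    (Ew : Endowment N Vmin Vmax) (aC : Set C) (aH : Set H) (t : ℕ)
    (μ : Matching C H) : Prop :=
  (∀ c h, μ.toHome c = some h → c ∈ aC ∧ h ∈ aH ∧ 0 ≤ M.U c h ∧ 0 ≤ M.V h c ∧
    M.Vt h c t ∈ M.Bend Ew h t) ∧
  (∀ c h, c ∈ aC → h ∈ aH → 0 ≤ M.U c h → 0 ≤ M.V h c → M.Vt h c t ∈ M.Bend Ew h t →
    ¬ ((∀ h', μ.toHome c = some h' → M.U c h' < M.U c h) ∧
       (∀ c', μ.toChild h = some c' → M.V h c' < M.V h c)))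

/-- Characterization of Home Endowed Deferred Acceptance: each period it produces the
home-optimal stable matching on the active agents with respect to the
endowment-modified preferences; it is a deterministic function of the history. -/
structure IsHEDA (M : Market C H) {N : ℕ} {Vmin Vmax : ℝ}
    (Ew : Endowment N Vmin Vmax) (Q : Mechanism C H) : Prop where
  stableStep : ∀ a t,
    M.IsStableEnd Ew {c | M.activeC Q a c t} {h | M.activeH Q a h t} t (Q a t)
  homeOpt : ∀ a t μ',
    M.IsStableEnd Ew {c | M.activeC Q a c t} {h | M.activeH Q a h t} t μ' →
    ∀ h c', μ'.toChild h = some c' →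
      ∃ c, (Q a t).toChild h = some c ∧ M.V h c' ≤ M.V h c
  histDet : M.historyDetermined Q

end Market

/-- Theorem 5 (patience-freeness part): Home Endowed Deferred Acceptance is
patience-free. -/
theorem heda_patienceFree {C H : Type} (M : Market C H) {N : ℕ} {Vmin Vmax : ℝ}
    (Ew : Endowment N Vmin Vmax) (Q : Mechanism C H) (hQ : M.IsHEDA Ew Q) :
    M.patienceFree Q := by
  intro a t h c hc t' htt' c' hc'
  -- strict ordering extends to all i < j ≤ N
  have hmono : ∀ i j, i < j → j ≤ N → ∀ x ∈ Ew.E i, ∀ y ∈ Ew.E j, y < x := by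
    intro i j
    induction j with
    | zero => intro h1; omega
    | succ j ih =>
      intro hij hjN x hx y hy
      rcases Nat.lt_succ_iff_lt_or_eq.mp hij with h1 | h2
      · obtain ⟨z, hz⟩ := Ew.nonempty j (by omega)
        exact lt_trans (Ew.ordered j (by omega) z hz y hy) (ih h1 (by omega) x hx z hz)
      · subst h2; exact Ew.ordered i (by omega) x hx y hy
  have hS := (hQ.stableStep a t).1 c h (((Q a t).consistent c h).mpr hc)
  have hS' := (hQ.stableStep (cfProfile a h t') t').1 c' h
    (((Q (cfProfile a h t') t').consistent c' h).mpr hc')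
  have harr : M.arrH h ≤ t := hS.2.1.1
  have hx : M.Vt h c t ∈ M.Bend Ew h t := hS.2.2.2.2
  have hy : M.Vt h c' t' ∈ M.Bend Ew h t' := hS'.2.2.2.2
  have hij : t - M.arrH h < t' - M.arrH h := by omega
  unfold Market.Bend at hx hy
  split_ifs at hx hy with h1 h2 h2
  · exact le_of_lt (hmono _ _ hij h2 _ hx _ hy)
  · have := Ew.subset _ h1 hx
    simp only [Set.mem_singleton_iff] at hy
    rw [hy]; exact this.1
  · omega
  · simp only [Set.mem_singleton_iff] at hx hy
    rw [hx, hy]
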